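/- Let h,k be nonnegative integers and set m=h+k. Then the following identity holds in ℚ^π(q): (−1)^k·π^{mk+C(k+1,2)}·q^{hk+k} = Σ_{a,b,c≥0, a−b+c=h−k} (−1)^b·π^{b(c+k)+C(b+1,2)+c+c(h−k)}·q^{−ac+b}·[c+k choose c]_{q,π}·[a+k choose b]_{q,π}·[h choose a]_{q,π}, where the sum on the right has only finitely many nonzero terms (since [h choose a]_{q,π}=0 for a>h and [a+k choose b]_{q,π}=0 for b>a+k). -/

import Mathlib

set_option synthInstance.maxHeartbeats 1000000
set_option maxHeartbeats 2000000

noncomputable section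

abbrev Rq : Type := RatFunc ℚ × RatFunc ℚ

def qq : Rq := (RatFunc.X, RatFunc.X)

def pp : Rq := (1, -1)

def C2 (n : ℤ) : ℤ := n * (n - 1) / 2

def qint (Q P : Rq) (n : ℤ) : Rq := ((P * Q) ^ n - Q ^ (-n)) / (P * Q - Q⁻¹)

def qfac (Q P : Rq) : ℕ → Rq
  | 0 => 1
  | n + 1 => qfac Q P n * qint Q P (n + 1)

def qbinom (Q P : Rq) (n : ℤ) (k : ℕ) : Rq :=
  (∏ l ∈ Finset.range k, ((P * Q) ^ (n - l) - Q ^ (-(n - (l : ℤ))))) /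
    (∏ l ∈ Finset.range k, ((P * Q) ^ ((l : ℤ) + 1) - Q ^ (-((l : ℤ) + 1))))

open Finset

section Abstract

variable {K : Type*} [Field K] (q p : K)

/-- `⟨m⟩ = (pq)^m - q^{-m}`. -/
def ang (m : ℤ) : K := (p * q) ^ m - q ^ (-m)

/-- field version of qbinom -/
def qbF (n : ℤ) (k : ℕ) : K :=
  (∏ l ∈ Finset.range k, ang q p (n - l)) / (∏ l ∈ Finset.range k, ang q p ((l : ℤ) + 1))

variable (hq0 : q ≠ 0) (hp2 : p ^ 2 = 1)
  (hs : ∀ s : ℕ, s ≠ 0 → ang q p (s : ℤ) ≠ 0)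

section Basic
include hp2 in
lemma hp0 : p ≠ 0 := by intro h; rw [h] at hp2; simp at hp2

include hq0 hp2 in
lemma hpq0 : p * q ≠ 0 := mul_ne_zero (hp0 p hp2) hq0

include hp2 in
lemma ppow_even {e : ℤ} (he : Even e) : p ^ e = 1 := by
  obtain ⟨r, rfl⟩ := he
  rw [zpow_add₀ (hp0 p hp2), ← mul_zpow, ← sq, hp2, one_zpow]

include hp2 in
lemma ppow_congr {e1 e2 : ℤ} (h : Even (e1 - e2)) : p ^ e1 = p ^ e2 := by
  have : e1 = e2 + (e1 - e2) := by ring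
  rw [this, zpow_add₀ (hp0 p hp2), ppow_even p hp2 h, mul_one]

lemma ang_zero : ang q p 0 = 0 := by simp [ang]

include hs in
lemma ang_ne {m : ℤ} (h1 : 0 < m) : ang q p m ≠ 0 := by
  have : m = (m.toNat : ℤ) := by omega
  rw [this]
  exact hs m.toNat (by omega)

include hs in
lemma den_ne (k : ℕ) : (∏ l ∈ Finset.range k, ang q p ((l : ℤ) + 1)) ≠ 0 := by
  apply Finset.prod_ne_zero_iff.2
  intro l _
  exact ang_ne q p hs (by omega)

lemma qbF_zero {n : ℤ} (hn : 0 ≤ n) {k : ℕ} (h : n < k) : qbF q p n k = 0 := by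
  unfold qbF
  rw [Finset.prod_eq_zero (i := n.toNat) (Finset.mem_range.2 (by omega))]
  · exact zero_div _
  · have : n - (n.toNat : ℤ) = 0 := by omega
    rw [this, ang_zero]

lemma qbF_kzero (n : ℤ) : qbF q p n 0 = 1 := by simp [qbF]

end Basic

include hq0 hp2 in
lemma ang_split (n m : ℤ) :
    ang q p n = (p * q) ^ (n - m) * ang q p m + q ^ (-m) * ang q p (n - m) := by
  have h1 : (p * q) ^ (n - m) * (p * q) ^ m = (p * q) ^ n := by
    rw [← zpow_add₀ (hpq0 q p hq0 hp2)]; ring_nf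
  have h2 : q ^ (-m) * q ^ (-(n - m)) = q ^ (-n) := by
    rw [← zpow_add₀ hq0]; ring_nf
  simp only [ang]
  linear_combination h2 - h1

-- Pascal
include hq0 hp2 hs in
lemma qbF_pascal (n : ℤ) (b : ℕ) :
    qbF q p n (b + 1) =
      (p * q) ^ (n - ((b : ℤ) + 1)) * qbF q p (n - 1) b +
        q ^ (-((b : ℤ) + 1)) * qbF q p (n - 1) (b + 1) := by
  have e1 : ∏ l ∈ range (b + 1), ang q p (n - l) =
      (∏ l ∈ range b, ang q p ((n - 1) - l)) * ang q p n := by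
    rw [Finset.prod_range_succ']
    congr 1
    · exact Finset.prod_congr rfl fun l _ => by congr 1; push_cast; ring
    · congr 1; push_cast; ring
  have e2 : ∏ l ∈ range (b + 1), ang q p ((n - 1) - l) =
      (∏ l ∈ range b, ang q p ((n - 1) - l)) * ang q p (n - ((b : ℤ) + 1)) := by
    rw [Finset.prod_range_succ]
    congr 2; push_cast; ring
  have e3 : ∏ l ∈ range (b + 1), ang q p ((l : ℤ) + 1) =
      (∏ l ∈ range b, ang q p ((l : ℤ) + 1)) * ang q p ((b : ℤ) + 1) := by
    rw [Finset.prod_range_succ]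
  unfold qbF
  rw [e1, e2, e3]
  have hDb := den_ne q p hs b
  have hab : ang q p ((b : ℤ) + 1) ≠ 0 := ang_ne q p hs (by omega)
  rw [ang_split q p hq0 hp2 n ((b : ℤ) + 1)]
  field_simp

-- symmetry
include hs in
lemma qbF_symm (c k : ℕ) : qbF q p ((c : ℤ) + k) c = qbF q p ((c : ℤ) + k) k := by
  have key : ∀ a b : ℕ, (∏ l ∈ range a, ang q p (((a : ℤ) + b) - l)) =
      ∏ l ∈ range a, ang q p ((b : ℤ) + 1 + l) := by
    intro a b
    rw [← Finset.prod_range_reflect]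
    exact Finset.prod_congr rfl fun l hl => by
      rw [Finset.mem_range] at hl
      congr 1
      have : ((a - 1 - l : ℕ) : ℤ) = (a : ℤ) - 1 - l := by omega
      rw [this]; ring
  have split : ∀ a b : ℕ, (∏ l ∈ range (a + b), ang q p ((l : ℤ) + 1)) =
      (∏ l ∈ range a, ang q p ((l : ℤ) + 1)) * ∏ l ∈ range b, ang q p ((a : ℤ) + 1 + l) := by
    intro a b
    rw [Finset.prod_range_add]
    congr 1
    exact Finset.prod_congr rfl fun l _ => by congr 1; push_cast; ring
  unfold qbF
  rw [key c k, show ((c : ℤ) + k) = ((k : ℤ) + c) by ring, key k c]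
  rw [div_eq_div_iff (den_ne q p hs c) (den_ne q p hs k)]
  calc (∏ l ∈ range c, ang q p ((k : ℤ) + 1 + l)) * ∏ l ∈ range k, ang q p ((l : ℤ) + 1)
      = ∏ l ∈ range (k + c), ang q p ((l : ℤ) + 1) := by rw [split k c]; ring
    _ = ∏ l ∈ range (c + k), ang q p ((l : ℤ) + 1) := by rw [Nat.add_comm]
    _ = (∏ l ∈ range k, ang q p ((c : ℤ) + 1 + l)) * ∏ l ∈ range c, ang q p ((l : ℤ) + 1) := by
        rw [split c k]; ring
-- monomial calculus
include hq0 in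
lemma qm (a b : ℤ) : q ^ a * q ^ b = q ^ (a + b) := (zpow_add₀ hq0 a b).symm
include hq0 hp2 in
lemma mono6 (a1 b1 a2 b2 a3 b3 c1 d1 c2 d2 c3 d3 : ℤ)
    (hE : Even (a1 + a2 + a3 - (c1 + c2 + c3))) (hF : b1 + b2 + b3 = d1 + d2 + d3) :
    (p ^ a1 * q ^ b1) * (p ^ a2 * q ^ b2) * (p ^ a3 * q ^ b3) =
      (p ^ c1 * q ^ d1) * (p ^ c2 * q ^ d2) * (p ^ c3 * q ^ d3) := by
  have hp0 : p ≠ 0 := hp0 p hp2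
  have L : ∀ x y z u v w : ℤ, (p ^ x * q ^ u) * (p ^ y * q ^ v) * (p ^ z * q ^ w)
      = p ^ (x+y+z) * q ^ (u+v+w) := by
    intro x y z u v w
    rw [zpow_add₀ hp0, zpow_add₀ hp0, zpow_add₀ hq0, zpow_add₀ hq0]
    ring
  rw [L, L, hF, ppow_congr p hp2 hE]

lemma pqm (e : ℤ) : (p * q) ^ e = p ^ e * q ^ e := mul_zpow p q e

-- the weight
def wt (n b k : ℕ) : K :=
  (-1 : K) ^ b * p ^ ((b.choose 2 : ℤ) + b * (n + 1)) * q ^ ((b : ℤ) * (1 + k - n))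

def Ssum (n k : ℕ) (d : ℤ) : K :=
  ∑ b ∈ Finset.range (n + 1), wt q p n b k * qbF q p n b * qbF q p (d + b) k

lemma choose2_succ (b : ℕ) : ((b + 1).choose 2 : ℤ) = (b.choose 2 : ℤ) + b := by
  have : (b + 1).choose 2 = b.choose 2 + b := by
    rw [Nat.choose_succ_succ]
    simp [Nat.choose_one_right, Nat.add_comm]
  exact_mod_cast congrArg (Nat.cast : ℕ → ℤ) this

-- the bracket coefficient identities
include hq0 hp2 in
lemma coeffY (n k b : ℕ) :
    wt q p (n + 1) (b + 1) (k + 1) * ((p * q) ^ ((n : ℤ) - b) * q ^ (-((k : ℤ) + 1))) +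
      wt q p (n + 1) b (k + 1) * q ^ (-(b : ℤ)) = 0 := by
  have hp0 : p ≠ 0 := hp0 p hp2
  have monoA : ∀ a1 b1 e b2 c1 d1 d2 : ℤ, Even (a1 + e - c1) → (b1 + e + b2 = d1 + d2) →
      p ^ a1 * q ^ b1 * (p ^ e * q ^ e) * q ^ b2 = p ^ c1 * q ^ d1 * q ^ d2 := by
    intro a1 b1 e b2 c1 d1 d2 hE hF
    have l1 : p ^ a1 * q ^ b1 * (p ^ e * q ^ e) * q ^ b2 = p ^ (a1 + e) * q ^ (b1 + e + b2) := by
      rw [zpow_add₀ hp0, zpow_add₀ hq0, zpow_add₀ hq0]; ring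
    have l2 : p ^ c1 * q ^ d1 * q ^ d2 = p ^ c1 * q ^ (d1 + d2) := by
      rw [zpow_add₀ hq0]; ring
    rw [l1, l2, hF, ppow_congr p hp2 hE]
  unfold wt
  rw [pqm, pow_succ]
  have hE : Even ((↑((b + 1).choose 2) + (↑(b + 1) : ℤ) * (↑(n + 1) + 1)) + ((n : ℤ) - b)
      - (↑(b.choose 2) + (↑b : ℤ) * (↑(n + 1) + 1))) := by
    refine ⟨(n : ℤ) + 1, ?_⟩
    rw [choose2_succ]
    push_cast
    ring
  have hF : ((↑(b + 1) : ℤ) * (1 + ↑(k + 1) - ↑(n + 1))) + ((n : ℤ) - b) + (-((k : ℤ) + 1))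
      = ((↑b : ℤ) * (1 + ↑(k + 1) - ↑(n + 1))) + (-(b : ℤ)) := by
    push_cast; ring
  linear_combination ((-1 : K) ^ b * (-1 : K)) *
    monoA (↑((b + 1).choose 2) + (↑(b + 1) : ℤ) * (↑(n + 1) + 1))
      ((↑(b + 1) : ℤ) * (1 + ↑(k + 1) - ↑(n + 1))) ((n : ℤ) - b) (-((k : ℤ) + 1))
      (↑(b.choose 2) + (↑b : ℤ) * (↑(n + 1) + 1)) ((↑b : ℤ) * (1 + ↑(k + 1) - ↑(n + 1)))
      (-(b : ℤ)) hE hF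


include hq0 hp2 in
lemma coeffX (n k b : ℕ) (d : ℤ) :
    wt q p (n + 1) (b + 1) (k + 1) * ((p * q) ^ ((n : ℤ) - b) * (p * q) ^ ((d : ℤ) + b - k)) +
      p ^ ((d : ℤ) - k) * q ^ (d + 1) * wt q p n b k = 0 := by
  have hp0 : p ≠ 0 := hp0 p hp2
  have monoB : ∀ a1 b1 e f c0 d0 c1 d1 : ℤ, Even (a1 + e + f - (c0 + c1)) →
      (b1 + e + f = d0 + d1) →
      p ^ a1 * q ^ b1 * (p ^ e * q ^ e * (p ^ f * q ^ f)) =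
        p ^ c0 * q ^ d0 * (p ^ c1 * q ^ d1) := by
    intro a1 b1 e f c0 d0 c1 d1 hE hF
    have l1 : p ^ a1 * q ^ b1 * (p ^ e * q ^ e * (p ^ f * q ^ f)) =
        p ^ (a1 + e + f) * q ^ (b1 + e + f) := by
      rw [zpow_add₀ hp0, zpow_add₀ hp0, zpow_add₀ hq0, zpow_add₀ hq0]; ring
    have l2 : p ^ c0 * q ^ d0 * (p ^ c1 * q ^ d1) = p ^ (c0 + c1) * q ^ (d0 + d1) := by
      rw [zpow_add₀ hp0, zpow_add₀ hq0]; ring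
    rw [l1, l2, hF, ppow_congr p hp2 hE]
  unfold wt
  simp only [pqm]
  rw [pow_succ]
  have hE : Even ((↑((b + 1).choose 2) + (↑(b + 1) : ℤ) * (↑(n + 1) + 1)) + ((n : ℤ) - b)
      + ((d : ℤ) + b - k) - (((d : ℤ) - k) + (↑(b.choose 2) + (↑b : ℤ) * (↑n + 1)))) := by
    refine ⟨(b : ℤ) + n + 1, ?_⟩
    rw [choose2_succ]
    push_cast
    ring
  have hF : ((↑(b + 1) : ℤ) * (1 + ↑(k + 1) - ↑(n + 1))) + ((n : ℤ) - b) + ((d : ℤ) + b - k)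
      = ((d : ℤ) + 1) + ((b : ℤ) * (1 + ↑k - ↑n)) := by
    push_cast; ring
  linear_combination ((-1 : K) ^ b * (-1 : K)) *
    monoB (↑((b + 1).choose 2) + (↑(b + 1) : ℤ) * (↑(n + 1) + 1))
      ((↑(b + 1) : ℤ) * (1 + ↑(k + 1) - ↑(n + 1))) ((n : ℤ) - b) ((d : ℤ) + b - k)
      ((d : ℤ) - k) ((d : ℤ) + 1)
      (↑(b.choose 2) + (↑b : ℤ) * (↑n + 1)) ((b : ℤ) * (1 + (k : ℤ) - ↑n)) hE hF

include hq0 hp2 in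
lemma coeffZ (n b : ℕ) :
    wt q p (n + 1) (b + 1) 0 * (p * q) ^ ((n : ℤ) - b) + wt q p (n + 1) b 0 * q ^ (-(b : ℤ)) = 0 := by
  have hp0 : p ≠ 0 := hp0 p hp2
  have monoC : ∀ a1 b1 e c1 d1 d2 : ℤ, Even (a1 + e - c1) → (b1 + e = d1 + d2) →
      p ^ a1 * q ^ b1 * (p ^ e * q ^ e) = p ^ c1 * q ^ d1 * q ^ d2 := by
    intro a1 b1 e c1 d1 d2 hE hF
    have l1 : p ^ a1 * q ^ b1 * (p ^ e * q ^ e) = p ^ (a1 + e) * q ^ (b1 + e) := by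
      rw [zpow_add₀ hp0, zpow_add₀ hq0]; ring
    have l2 : p ^ c1 * q ^ d1 * q ^ d2 = p ^ c1 * q ^ (d1 + d2) := by
      rw [zpow_add₀ hq0]; ring
    rw [l1, l2, hF, ppow_congr p hp2 hE]
  unfold wt
  rw [pqm, pow_succ]
  have hE : Even ((↑((b + 1).choose 2) + (↑(b + 1) : ℤ) * (↑(n + 1) + 1)) + ((n : ℤ) - b)
      - (↑(b.choose 2) + (↑b : ℤ) * (↑(n + 1) + 1))) := by
    refine ⟨(n : ℤ) + 1, ?_⟩
    rw [choose2_succ]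
    push_cast
    ring
  have hF : ((↑(b + 1) : ℤ) * (1 + ↑(0 : ℕ) - ↑(n + 1))) + ((n : ℤ) - b)
      = ((↑b : ℤ) * (1 + ↑(0 : ℕ) - ↑(n + 1))) + (-(b : ℤ)) := by
    push_cast; ring
  linear_combination ((-1 : K) ^ b * (-1 : K)) *
    monoC (↑((b + 1).choose 2) + (↑(b + 1) : ℤ) * (↑(n + 1) + 1))
      ((↑(b + 1) : ℤ) * (1 + ↑(0 : ℕ) - ↑(n + 1))) ((n : ℤ) - b)
      (↑(b.choose 2) + (↑b : ℤ) * (↑(n + 1) + 1)) ((↑b : ℤ) * (1 + ↑(0 : ℕ) - ↑(n + 1)))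
      (-(b : ℤ)) hE hF


include hq0 hp2 hs in
lemma Ssum_rec (n k : ℕ) (d : ℤ) :
    Ssum q p (n + 1) (k + 1) d = -(p ^ ((d : ℤ) - k) * q ^ (d + 1)) * Ssum q p n k d := by
  have hpas1 : ∀ b : ℕ, qbF q p (↑(n + 1)) (b + 1) =
      (p * q) ^ ((n : ℤ) - b) * qbF q p n b + q ^ (-((b : ℤ) + 1)) * qbF q p n (b + 1) := by
    intro b
    have h := qbF_pascal q p hq0 hp2 hs (↑(n + 1) : ℤ) b
    rw [show ((n + 1 : ℕ) : ℤ) - ((b : ℤ) + 1) = (n : ℤ) - b by push_cast; ring,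
      show ((n + 1 : ℕ) : ℤ) - 1 = (n : ℤ) by push_cast; ring] at h
    exact h
  have hpas2 : ∀ b : ℕ, qbF q p (d + ↑(b + 1)) (k + 1) =
      (p * q) ^ ((d : ℤ) + b - k) * qbF q p (d + b) k +
        q ^ (-((k : ℤ) + 1)) * qbF q p (d + b) (k + 1) := by
    intro b
    have h := qbF_pascal q p hq0 hp2 hs (d + ↑(b + 1) : ℤ) k
    rw [show (d + ((b + 1 : ℕ) : ℤ)) - ((k : ℤ) + 1) = (d : ℤ) + b - k by push_cast; ring,
      show (d + ((b + 1 : ℕ) : ℤ)) - 1 = d + (b : ℤ) by push_cast; ring] at h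
    exact h
  have hz : qbF q p (↑n) (n + 1) = 0 := qbF_zero q p (by positivity) (by push_cast; omega)
  unfold Ssum
  rw [Finset.sum_range_succ']
  have step1 : ∀ b ∈ Finset.range (n + 1),
      wt q p (n + 1) (b + 1) (k + 1) * qbF q p (↑(n + 1)) (b + 1) * qbF q p (d + ↑(b + 1)) (k + 1)
      = (wt q p (n + 1) (b + 1) (k + 1) * ((p * q) ^ ((n : ℤ) - b) * (p * q) ^ ((d : ℤ) + b - k)) *
            (qbF q p n b * qbF q p (d + b) k)
          + wt q p (n + 1) (b + 1) (k + 1) * ((p * q) ^ ((n : ℤ) - b) * q ^ (-((k : ℤ) + 1))) *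
            (qbF q p n b * qbF q p (d + b) (k + 1)))
        + (wt q p (n + 1) (b + 1) (k + 1) * q ^ (-((b : ℤ) + 1)) * qbF q p n (b + 1) *
            qbF q p (d + ↑(b + 1)) (k + 1)) := by
    intro b _
    rw [hpas1 b]
    rw [show (wt q p (n + 1) (b + 1) (k + 1) *
        ((p * q) ^ ((n : ℤ) - b) * qbF q p n b + q ^ (-((b : ℤ) + 1)) * qbF q p n (b + 1)) *
        qbF q p (d + ↑(b + 1)) (k + 1))
      = wt q p (n + 1) (b + 1) (k + 1) * ((p * q) ^ ((n : ℤ) - b) * qbF q p n b) *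
          qbF q p (d + ↑(b + 1)) (k + 1)
        + wt q p (n + 1) (b + 1) (k + 1) * q ^ (-((b : ℤ) + 1)) * qbF q p n (b + 1) *
          qbF q p (d + ↑(b + 1)) (k + 1) from by ring]
    congr 1
    rw [hpas2 b]
    ring
  rw [Finset.sum_congr rfl step1, Finset.sum_add_distrib]
  have ecast : ∀ b ∈ Finset.range (n + 1),
      (wt q p (n + 1) (b + 1) (k + 1) * q ^ (-((b : ℤ) + 1)) * qbF q p n (b + 1) *
        qbF q p (d + ↑(b + 1)) (k + 1))
      = (fun b => wt q p (n + 1) b (k + 1) * q ^ (-(b : ℤ)) * qbF q p n b *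
          qbF q p (d + b) (k + 1)) (b + 1) := by
    intro b _
    simp only
    rw [show (-((b : ℤ) + 1)) = (-((b + 1 : ℕ) : ℤ)) by push_cast; ring]
  rw [Finset.sum_congr rfl ecast]
  have h1 := Finset.sum_range_succ'
    (fun b => wt q p (n + 1) b (k + 1) * q ^ (-(b : ℤ)) * qbF q p n b * qbF q p (d + b) (k + 1))
    (n + 1)
  have h2 := Finset.sum_range_succ
    (fun b => wt q p (n + 1) b (k + 1) * q ^ (-(b : ℤ)) * qbF q p n b * qbF q p (d + b) (k + 1))
    (n + 1)
  have hYtop : wt q p (n + 1) (n + 1) (k + 1) * q ^ (-((n + 1 : ℕ) : ℤ)) * qbF q p n (n + 1) *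
      qbF q p (d + (n + 1 : ℕ)) (k + 1) = 0 := by
    rw [hz]; ring
  have step2 : ∑ b ∈ Finset.range (n + 1), (fun b => wt q p (n + 1) b (k + 1) * q ^ (-(b : ℤ)) *
        qbF q p n b * qbF q p (d + b) (k + 1)) (b + 1)
      = ∑ b ∈ Finset.range (n + 1), wt q p (n + 1) b (k + 1) * q ^ (-(b : ℤ)) *
          qbF q p n b * qbF q p (d + b) (k + 1)
        - wt q p (n + 1) 0 (k + 1) * q ^ (-((0 : ℕ) : ℤ)) * qbF q p n 0 *
            qbF q p (d + (0 : ℕ)) (k + 1) := by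
    simp only at h1 h2 hYtop ⊢
    rw [hYtop] at h2
    linear_combination h2 - h1
  rw [step2]
  have hF0 : wt q p (n + 1) 0 (k + 1) * qbF q p (↑(n + 1)) 0 * qbF q p (d + ↑(0 : ℕ)) (k + 1)
      = wt q p (n + 1) 0 (k + 1) * q ^ (-((0 : ℕ) : ℤ)) * qbF q p n 0 *
          qbF q p (d + (0 : ℕ)) (k + 1) := by
    rw [qbF_kzero q p, qbF_kzero q p]
    norm_num
  rw [hF0]
  have pointwise : ∀ b ∈ Finset.range (n + 1),
      wt q p (n + 1) (b + 1) (k + 1) * ((p * q) ^ ((n : ℤ) - b) * (p * q) ^ ((d : ℤ) + b - k)) *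
          (qbF q p n b * qbF q p (d + b) k)
        + wt q p (n + 1) (b + 1) (k + 1) * ((p * q) ^ ((n : ℤ) - b) * q ^ (-((k : ℤ) + 1))) *
          (qbF q p n b * qbF q p (d + b) (k + 1))
        + wt q p (n + 1) b (k + 1) * q ^ (-(b : ℤ)) * qbF q p n b * qbF q p (d + b) (k + 1)
      = -(p ^ ((d : ℤ) - k) * q ^ (d + 1)) * (wt q p n b k * qbF q p n b * qbF q p (d + b) k) := by
    intro b _
    linear_combination (qbF q p n b * qbF q p (d + (b : ℤ)) (k + 1)) * coeffY q p hq0 hp2 n k b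
      + (qbF q p n b * qbF q p (d + (b : ℤ)) k) * coeffX q p hq0 hp2 n k b d
  rw [Finset.mul_sum]
  rw [show ∀ A B C : K, A + (B - C) + C = A + B from by intros; ring, ← Finset.sum_add_distrib]
  exact Finset.sum_congr rfl pointwise


include hq0 hp2 hs in
lemma Ssum_base0 (n : ℕ) (d : ℤ) : Ssum q p (n + 1) 0 d = 0 := by
  have hpas1 : ∀ b : ℕ, qbF q p (↑(n + 1)) (b + 1) =
      (p * q) ^ ((n : ℤ) - b) * qbF q p n b + q ^ (-((b : ℤ) + 1)) * qbF q p n (b + 1) := by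
    intro b
    have h := qbF_pascal q p hq0 hp2 hs (↑(n + 1) : ℤ) b
    rw [show ((n + 1 : ℕ) : ℤ) - ((b : ℤ) + 1) = (n : ℤ) - b by push_cast; ring,
      show ((n + 1 : ℕ) : ℤ) - 1 = (n : ℤ) by push_cast; ring] at h
    exact h
  have hz : qbF q p (↑n) (n + 1) = 0 := qbF_zero q p (by positivity) (by push_cast; omega)
  unfold Ssum
  simp only [qbF_kzero q p, mul_one]
  rw [Finset.sum_range_succ']
  have step1 : ∀ b ∈ Finset.range (n + 1),
      wt q p (n + 1) (b + 1) 0 * qbF q p (↑(n + 1)) (b + 1)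
      = wt q p (n + 1) (b + 1) 0 * (p * q) ^ ((n : ℤ) - b) * qbF q p n b
        + (fun b => wt q p (n + 1) b 0 * q ^ (-(b : ℤ)) * qbF q p n b) (b + 1) := by
    intro b _
    simp only
    rw [hpas1 b, show (-(((b + 1 : ℕ)) : ℤ)) = (-((b : ℤ) + 1)) by push_cast; ring]
    ring
  rw [Finset.sum_congr rfl step1, Finset.sum_add_distrib]
  have h1 := Finset.sum_range_succ'
    (fun b => wt q p (n + 1) b 0 * q ^ (-(b : ℤ)) * qbF q p n b) (n + 1)
  have h2 := Finset.sum_range_succ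
    (fun b => wt q p (n + 1) b 0 * q ^ (-(b : ℤ)) * qbF q p n b) (n + 1)
  have hYtop : wt q p (n + 1) (n + 1) 0 * q ^ (-((n + 1 : ℕ) : ℤ)) * qbF q p n (n + 1) = 0 := by
    rw [hz]; ring
  have step2 : ∑ b ∈ Finset.range (n + 1),
        (fun b => wt q p (n + 1) b 0 * q ^ (-(b : ℤ)) * qbF q p n b) (b + 1)
      = ∑ b ∈ Finset.range (n + 1), wt q p (n + 1) b 0 * q ^ (-(b : ℤ)) * qbF q p n b
        - wt q p (n + 1) 0 0 * q ^ (-((0 : ℕ) : ℤ)) * qbF q p n 0 := by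
    simp only at h1 h2 hYtop ⊢
    rw [hYtop] at h2
    linear_combination h2 - h1
  rw [step2]
  have hF0 : wt q p (n + 1) 0 0 * qbF q p (↑(n + 1)) 0
      = wt q p (n + 1) 0 0 * q ^ (-((0 : ℕ) : ℤ)) * qbF q p n 0 := by
    rw [qbF_kzero q p, qbF_kzero q p]
    norm_num
  rw [hF0]
  have pointwise : ∀ b ∈ Finset.range (n + 1),
      wt q p (n + 1) (b + 1) 0 * (p * q) ^ ((n : ℤ) - b) * qbF q p n b
        + wt q p (n + 1) b 0 * q ^ (-(b : ℤ)) * qbF q p n b = 0 := by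
    intro b _
    linear_combination (qbF q p n b) * coeffZ q p hq0 hp2 n b
  rw [show ∀ A B C : K, A + (B - C) + C = A + B from by intros; ring, ← Finset.sum_add_distrib]
  rw [Finset.sum_congr rfl pointwise]
  simp

lemma Ssum_n0 (k : ℕ) (d : ℤ) : Ssum q p 0 k d = qbF q p d k := by
  unfold Ssum wt
  simp [qbF_kzero q p]

include hq0 hp2 hs in
lemma Ssum_vanish (k : ℕ) : ∀ n : ℕ, k < n → ∀ d : ℤ, Ssum q p n k d = 0 := by
  induction k with
  | zero =>
    intro n hn d
    obtain ⟨m, rfl⟩ : ∃ m, n = m + 1 := ⟨n - 1, by omega⟩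
    exact Ssum_base0 q p hq0 hp2 hs m d
  | succ k ih =>
    intro n hn d
    obtain ⟨m, rfl⟩ : ∃ m, n = m + 1 := ⟨n - 1, by omega⟩
    rw [Ssum_rec q p hq0 hp2 hs m k d, ih m (by omega) d]
    ring

include hq0 hp2 hs in
lemma Ssum_diag (k : ℕ) (d : ℤ) :
    Ssum q p k k d = (-1 : K) ^ k * p ^ ((k : ℤ) * d - (k.choose 2 : ℤ)) * q ^ ((k : ℤ) * (d + 1)) := by
  induction k with
  | zero => simp [Ssum_n0, qbF_kzero q p]
  | succ k ih =>
    rw [Ssum_rec q p hq0 hp2 hs k k d, ih]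
    have hp0 : p ≠ 0 := hp0 p hp2
    rw [pow_succ]
    have e1 : p ^ ((d : ℤ) - k) * p ^ ((k : ℤ) * d - (k.choose 2 : ℤ))
        = p ^ ((↑(k + 1) : ℤ) * d - ((k + 1).choose 2 : ℤ)) := by
      rw [← zpow_add₀ hp0]
      congr 1
      rw [choose2_succ]
      push_cast
      ring
    have e2 : q ^ (d + 1) * q ^ ((k : ℤ) * (d + 1)) = q ^ ((↑(k + 1) : ℤ) * (d + 1)) := by
      rw [← zpow_add₀ hq0]
      congr 1
      push_cast
      ring
    linear_combination (-1 : K) * (-1 : K) ^ k * ((q ^ (d + 1) * q ^ ((k : ℤ) * (d + 1))) * e1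
      + p ^ ((↑(k + 1) : ℤ) * d - ((k + 1).choose 2 : ℤ)) * e2)


lemma two_c2 (k : ℕ) : 2 * (k.choose 2 : ℤ) = k * (k - 1) := by
  induction k with
  | zero => simp
  | succ k ih =>
    rw [choose2_succ]
    push_cast
    linear_combination ih

include hq0 hp2 hs in
lemma perb (h k a b : ℕ) (ha : a ≤ h) :
    (∑ c ∈ Finset.range (h + 1),
      if ((a : ℤ) - b + c = (h : ℤ) - k) then
        (-1 : K) ^ b *
          p ^ ((b * (c + k) + (b + 1).choose 2 + c : ℤ) + (c : ℤ) * ((h : ℤ) - k)) *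
          q ^ (-(a : ℤ) * c + b) *
          qbF q p ((c : ℤ) + k) c * qbF q p ((a : ℤ) + k) b * qbF q p (h : ℤ) a
      else 0)
    = (p ^ (((h : ℤ) - a - k) * (1 + (h : ℤ) - k)) * q ^ (-(a : ℤ) * ((h : ℤ) - a - k))) *
        (wt q p (a + k) b k * qbF q p (↑(a + k)) b * qbF q p ((h : ℤ) - ↑a + ↑b) k) *
        qbF q p (h : ℤ) a := by
  have hp0 : p ≠ 0 := hp0 p hp2
  have monoD : ∀ e1 f1 c1 d1 c2 d2 : ℤ, Even (e1 - (c1 + c2)) → f1 = d1 + d2 →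
      p ^ e1 * q ^ f1 = p ^ c1 * q ^ d1 * (p ^ c2 * q ^ d2) := by
    intro e1 f1 c1 d1 c2 d2 hE hF
    have l2 : p ^ c1 * q ^ d1 * (p ^ c2 * q ^ d2) = p ^ (c1 + c2) * q ^ (d1 + d2) := by
      rw [zpow_add₀ hp0, zpow_add₀ hq0]; ring
    rw [l2, hF, ppow_congr p hp2 hE]
  set z : ℤ := (h : ℤ) - k - a + b with hz
  by_cases h0 : 0 ≤ z
  · -- condition picks c = z.toNat if z ≤ h, else empty
    have hcond : ∀ c ∈ Finset.range (h + 1),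
        (if ((a : ℤ) - b + c = (h : ℤ) - k) then
          (-1 : K) ^ b *
            p ^ ((b * (c + k) + (b + 1).choose 2 + c : ℤ) + (c : ℤ) * ((h : ℤ) - k)) *
            q ^ (-(a : ℤ) * c + b) *
            qbF q p ((c : ℤ) + k) c * qbF q p ((a : ℤ) + k) b * qbF q p (h : ℤ) a
        else 0)
        = (if c = z.toNat then
          (-1 : K) ^ b *
            p ^ ((b * (c + k) + (b + 1).choose 2 + c : ℤ) + (c : ℤ) * ((h : ℤ) - k)) *
            q ^ (-(a : ℤ) * c + b) *
            qbF q p ((c : ℤ) + k) c * qbF q p ((a : ℤ) + k) b * qbF q p (h : ℤ) a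
        else 0) := by
      intro c _
      refine if_congr ?_ rfl rfl
      omega
    rw [Finset.sum_congr rfl hcond, Finset.sum_ite_eq']
    by_cases h1 : z ≤ (h : ℤ)
    · rw [if_pos (Finset.mem_range.2 (by omega))]
      set c := z.toNat with hcdef
      have hc : (c : ℤ) = (h : ℤ) - k - a + b := by omega
      -- rewrite the first binomial by symmetry and index identification
      have hsym : qbF q p ((c : ℤ) + k) c = qbF q p ((h : ℤ) - ↑a + ↑b) k := by
        have e := qbF_symm q p hs c k
        rw [show ((h : ℤ) - ↑a + ↑b) = (c : ℤ) + k by omega]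
        exact e
      have hcast : qbF q p ((a : ℤ) + k) b = qbF q p (↑(a + k)) b := by
        norm_cast
      rw [hsym, hcast]
      have hcb := choose2_succ b
      have h2 := two_c2 b
      have hE : Even (((b * (c + k) + (b + 1).choose 2 + c : ℤ) + (c : ℤ) * ((h : ℤ) - k))
          - ((((h : ℤ) - a - k) * (1 + (h : ℤ) - k)) +
            ((b.choose 2 : ℤ) + (b : ℤ) * (↑(a + k) + 1)))) := by
        refine ⟨((b + 1).choose 2 : ℤ) + (b : ℤ) * ((h : ℤ) - a - k), ?_⟩
        push_cast
        push_cast at hc h2 hcb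
        linear_combination ((b : ℤ) + 1 + (h : ℤ) - k) * hc - h2 - hcb
      have hF : (-(a : ℤ) * c + b)
          = (-(a : ℤ) * ((h : ℤ) - a - k)) + ((b : ℤ) * (1 + (k : ℤ) - ↑(a + k))) := by
        push_cast
        push_cast at hc
        linear_combination (-(a : ℤ)) * hc
      have hmono := monoD ((b * (c + k) + (b + 1).choose 2 + c : ℤ) + (c : ℤ) * ((h : ℤ) - k))
        (-(a : ℤ) * c + b)
        (((h : ℤ) - a - k) * (1 + (h : ℤ) - k)) (-(a : ℤ) * ((h : ℤ) - a - k))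
        ((b.choose 2 : ℤ) + (b : ℤ) * (↑(a + k) + 1)) ((b : ℤ) * (1 + (k : ℤ) - ↑(a + k)))
        hE hF
      unfold wt
      linear_combination ((-1 : K) ^ b * qbF q p ((h : ℤ) - ↑a + ↑b) k *
        qbF q p (↑(a + k)) b * qbF q p (h : ℤ) a) * hmono
    · -- z > h : both sides are zero
      rw [if_neg (by simp only [Finset.mem_range]; omega)]
      have : qbF q p (↑(a + k)) b = 0 := by
        apply qbF_zero q p (by positivity)
        push_cast
        omega
      rw [this]
      ring
  · -- z < 0 : empty sum; rhs has vanishing binomial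
    rw [Finset.sum_eq_zero (fun c _ => if_neg (by omega))]
    have : qbF q p ((h : ℤ) - ↑a + ↑b) k = 0 := by
      apply qbF_zero q p (by omega) (by omega)
    rw [this]
    ring


include hq0 hp2 hs in
lemma comp_main (h k : ℕ) :
    (-1 : K) ^ k * p ^ ((h + k) * k + (k + 1).choose 2) * q ^ (h * k + k) =
      ∑ t ∈ Finset.range (h + 1) ×ˢ Finset.range (h + k + 1) ×ˢ Finset.range (h + 1),
        (if ((t.1 : ℤ) - t.2.1 + t.2.2 = (h : ℤ) - k) then
          (-1 : K) ^ t.2.1 *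
            p ^ ((t.2.1 * (t.2.2 + k) + (t.2.1 + 1).choose 2 + t.2.2 : ℤ) +
              (t.2.2 : ℤ) * ((h : ℤ) - k)) *
            q ^ (-(t.1 : ℤ) * t.2.2 + t.2.1) *
            qbF q p ((t.2.2 : ℤ) + k) t.2.2 * qbF q p ((t.1 : ℤ) + k) t.2.1 *
            qbF q p (h : ℤ) t.1
        else 0) := by
  have hp0 : p ≠ 0 := hp0 p hp2
  rw [Finset.sum_product]
  have main : ∀ a ∈ Finset.range (h + 1),
      (∑ y ∈ Finset.range (h + k + 1) ×ˢ Finset.range (h + 1),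
        (if ((a : ℤ) - y.1 + y.2 = (h : ℤ) - k) then
          (-1 : K) ^ y.1 *
            p ^ ((y.1 * (y.2 + k) + (y.1 + 1).choose 2 + y.2 : ℤ) +
              (y.2 : ℤ) * ((h : ℤ) - k)) *
            q ^ (-(a : ℤ) * y.2 + y.1) *
            qbF q p ((y.2 : ℤ) + k) y.2 * qbF q p ((a : ℤ) + k) y.1 *
            qbF q p (h : ℤ) a
        else 0))
      = (p ^ (((h : ℤ) - a - k) * (1 + (h : ℤ) - k)) * q ^ (-(a : ℤ) * ((h : ℤ) - a - k))) *
          Ssum q p (a + k) k ((h : ℤ) - a) * qbF q p (h : ℤ) a := by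
    intro a hmem
    rw [Finset.mem_range] at hmem
    rw [Finset.sum_product]
    rw [Finset.sum_congr rfl (fun b _ => perb q p hq0 hp2 hs h k a b (by omega))]
    have hS : ∑ b ∈ Finset.range (h + k + 1),
        (wt q p (a + k) b k * qbF q p (↑(a + k)) b * qbF q p ((h : ℤ) - ↑a + ↑b) k)
        = Ssum q p (a + k) k ((h : ℤ) - a) := by
      unfold Ssum
      refine (Finset.sum_subset (Finset.range_subset_range.2 (by omega)) ?_).symm
      intro b _ hb
      rw [Finset.mem_range, not_lt] at hb
      rw [qbF_zero q p (by positivity) (by push_cast; omega)]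
      ring
    rw [← hS, Finset.mul_sum, Finset.sum_mul]
  rw [Finset.sum_congr rfl main]
  rw [Finset.sum_eq_single_of_mem 0 (Finset.mem_range.2 (by omega)) (fun a _ ha => by
    rw [Ssum_vanish q p hq0 hp2 hs k (a + k) (by omega)]
    ring)]
  rw [Nat.zero_add k]
  rw [Ssum_diag q p hq0 hp2 hs k ((h : ℤ) - ↑(0 : ℕ))]
  rw [qbF_kzero q p]
  rw [← zpow_natCast p ((h + k) * k + (k + 1).choose 2), ← zpow_natCast q (h * k + k)]
  have hE : Even ((((h + k) * k + (k + 1).choose 2 : ℕ) : ℤ) -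
      ((((h : ℤ) - ↑(0 : ℕ) - k) * (1 + (h : ℤ) - k)) +
        ((k : ℤ) * ((h : ℤ) - ↑(0 : ℕ)) - (k.choose 2 : ℤ)))) := by
    have e : (((h + k) * k + (k + 1).choose 2 : ℕ) : ℤ) -
        ((((h : ℤ) - ↑(0 : ℕ) - k) * (1 + (h : ℤ) - k)) +
          ((k : ℤ) * ((h : ℤ) - ↑(0 : ℕ)) - (k.choose 2 : ℤ)))
        = 2 * (k : ℤ) ^ 2 - (((h : ℤ) - k) * (((h : ℤ) - k) + 1)) := by
      have hcb := choose2_succ k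
      have h2 := two_c2 k
      push_cast
      push_cast at hcb h2
      linear_combination hcb + h2
    rw [e]
    exact (even_two_mul _).sub (Int.even_mul_succ_self ((h : ℤ) - k))
  have hF : ((h * k + k : ℕ) : ℤ) = (-(↑(0 : ℕ) : ℤ) * ((h : ℤ) - ↑(0 : ℕ) - k)) +
      ((k : ℤ) * (((h : ℤ) - ↑(0 : ℕ)) + 1)) := by
    push_cast; ring
  have hmono : p ^ (((h + k) * k + (k + 1).choose 2 : ℕ) : ℤ) * q ^ ((h * k + k : ℕ) : ℤ)
      = p ^ (((h : ℤ) - ↑(0 : ℕ) - k) * (1 + (h : ℤ) - k)) *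
          q ^ (-(↑(0 : ℕ) : ℤ) * ((h : ℤ) - ↑(0 : ℕ) - k)) *
        (p ^ ((k : ℤ) * ((h : ℤ) - ↑(0 : ℕ)) - (k.choose 2 : ℤ)) *
          q ^ ((k : ℤ) * (((h : ℤ) - ↑(0 : ℕ)) + 1))) := by
    have l2 : ∀ c1 d1 c2 d2 : ℤ, p ^ c1 * q ^ d1 * (p ^ c2 * q ^ d2)
        = p ^ (c1 + c2) * q ^ (d1 + d2) := by
      intro c1 d1 c2 d2
      rw [zpow_add₀ hp0, zpow_add₀ hq0]; ring
    rw [l2, hF, ppow_congr p hp2 hE]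
  linear_combination ((-1 : K) ^ k) * hmono


end Abstract

-- ## Transfer to `Rq`

lemma fst_zpow (x : Rq) (z : ℤ) : (x ^ z).1 = x.1 ^ z := by cases z <;> rfl
lemma snd_zpow (x : Rq) (z : ℤ) : (x ^ z).2 = x.2 ^ z := by cases z <;> rfl
lemma pp_fst : pp.1 = 1 := rfl
lemma pp_snd : pp.2 = -1 := rfl
lemma qq_fst : qq.1 = RatFunc.X := rfl
lemma qq_snd : qq.2 = RatFunc.X := rfl

lemma qbinom_fst (n : ℤ) (k : ℕ) : (qbinom qq pp n k).1 = qbF RatFunc.X 1 n k := by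
  unfold qbinom qbF ang
  simp only [Prod.fst_div, Prod.fst_prod, Prod.fst_sub, fst_zpow, Prod.fst_mul, pp_fst, qq_fst]

lemma qbinom_snd (n : ℤ) (k : ℕ) : (qbinom qq pp n k).2 = qbF RatFunc.X (-1) n k := by
  unfold qbinom qbF ang
  simp only [Prod.snd_div, Prod.snd_prod, Prod.snd_sub, snd_zpow, Prod.snd_mul, pp_snd, qq_snd]

lemma qbinom_zeroRq {n : ℤ} (hn : 0 ≤ n) {k : ℕ} (hk : n < k) : qbinom qq pp n k = 0 := by
  rw [Prod.ext_iff]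
  refine ⟨?_, ?_⟩
  · rw [qbinom_fst, qbF_zero _ _ hn hk]; rfl
  · rw [qbinom_snd, qbF_zero _ _ hn hk]; rfl

lemma Xpow_ne_C (s : ℕ) (hs : s ≠ 0) (c : ℚ) : (RatFunc.X : RatFunc ℚ) ^ (2 * s) ≠ RatFunc.C c := by
  intro hX
  have h2 : (Polynomial.X : Polynomial ℚ) ^ (2 * s) = Polynomial.C c := by
    apply RatFunc.algebraMap_injective ℚ
    rw [map_pow, RatFunc.algebraMap_X, RatFunc.algebraMap_C, hX]
  have h0 := congrArg (Polynomial.eval 0) h2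
  have h1 := congrArg (Polynomial.eval 1) h2
  simp [pow_eq_zero_iff, hs] at h0 h1
  rw [← h0] at h1
  norm_num at h1

lemma ang_ne_X (p : RatFunc ℚ) (hp : p = 1 ∨ p = -1) :
    ∀ s : ℕ, s ≠ 0 → ang RatFunc.X p (s : ℤ) ≠ 0 := by
  intro s h0 hcontra
  have hX : (RatFunc.X : RatFunc ℚ) ≠ 0 := RatFunc.X_ne_zero
  unfold ang at hcontra
  rw [sub_eq_zero] at hcontra
  have h2 : ((p * RatFunc.X) ^ (s : ℤ)) * RatFunc.X ^ (s : ℤ) = 1 := by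
    rw [hcontra, ← zpow_add₀ hX]
    norm_num
  rw [mul_zpow, mul_assoc, ← zpow_add₀ hX] at h2
  have h3 : p ^ (s : ℤ) * RatFunc.X ^ ((2 * s : ℕ) : ℤ) = 1 := by
    rw [show ((2 * s : ℕ) : ℤ) = (s : ℤ) + s from by push_cast; ring]
    exact h2
  rw [zpow_natCast, zpow_natCast] at h3
  have hps : p ^ s = 1 ∨ p ^ s = -1 := by
    rcases hp with rfl | rfl
    · left; exact one_pow _
    · exact neg_one_pow_eq_or _ s
  rcases hps with hp1 | hp1
  · rw [hp1, one_mul] at h3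
    exact Xpow_ne_C s h0 1 (by rw [h3, map_one])
  · rw [hp1] at h3
    have : (RatFunc.X : RatFunc ℚ) ^ (2 * s) = -1 := by
      have := congrArg (fun x => (-1 : RatFunc ℚ) * x) h3
      simpa using this
    exact Xpow_ne_C s h0 (-1) (by rw [this, map_neg, map_one])

/-- The key `(q,π)`-binomial identity (★): for nonnegative integers `h, k` with `m = h + k`,
`(-1)^k π^{mk + C(k+1,2)} q^{hk+k}`
` = Σ_{a-b+c = h-k} (-1)^b π^{b(c+k) + C(b+1,2) + c + c(h-k)} q^{-ac+b} [c+k choose c][a+k choose b][h choose a]`,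
where the sum (a finsum) has only finitely many nonzero terms. -/
theorem qbinom_star_identity (h k : ℕ) :
    (-1 : Rq) ^ k * pp ^ ((h + k) * k + (k + 1).choose 2) * qq ^ (h * k + k) =
      ∑ᶠ t : ℕ × ℕ × ℕ,
        if (t.1 : ℤ) - t.2.1 + t.2.2 = (h : ℤ) - k then
          (-1 : Rq) ^ t.2.1 *
            pp ^ ((t.2.1 * (t.2.2 + k) + (t.2.1 + 1).choose 2 + t.2.2 : ℤ) +
              (t.2.2 : ℤ) * ((h : ℤ) - k)) *
            qq ^ (-(t.1 : ℤ) * t.2.2 + t.2.1) *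
            qbinom qq pp ((t.2.2 : ℤ) + k) t.2.2 *
            qbinom qq pp ((t.1 : ℤ) + k) t.2.1 *
            qbinom qq pp (h : ℤ) t.1
        else 0 := by
  classical
  have hX : (RatFunc.X : RatFunc ℚ) ≠ 0 := RatFunc.X_ne_zero
  have hsupp : Function.support (fun t : ℕ × ℕ × ℕ =>
      if (t.1 : ℤ) - t.2.1 + t.2.2 = (h : ℤ) - k then
        (-1 : Rq) ^ t.2.1 *
          pp ^ ((t.2.1 * (t.2.2 + k) + (t.2.1 + 1).choose 2 + t.2.2 : ℤ) +
            (t.2.2 : ℤ) * ((h : ℤ) - k)) *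
          qq ^ (-(t.1 : ℤ) * t.2.2 + t.2.1) *
          qbinom qq pp ((t.2.2 : ℤ) + k) t.2.2 *
          qbinom qq pp ((t.1 : ℤ) + k) t.2.1 *
          qbinom qq pp (h : ℤ) t.1
      else 0) ⊆
      ↑(Finset.range (h + 1) ×ˢ Finset.range (h + k + 1) ×ˢ Finset.range (h + 1)) := by
    rintro ⟨a, b, c⟩ ht
    simp only [Function.mem_support] at ht
    simp only [Finset.coe_product, Set.mem_prod, Finset.mem_coe, Finset.mem_range]
    by_contra hT
    apply ht
    by_cases hcond : ((a : ℤ) - b + c = (h : ℤ) - k)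
    swap
    · rw [if_neg hcond]
    rw [if_pos hcond]
    simp only [not_and_or, not_lt] at hT
    have hzero : ((h : ℤ) < a) ∨ (((a : ℤ) + k) < b) := by omega
    rcases hzero with hz | hz
    · rw [qbinom_zeroRq (by positivity) hz, mul_zero]
    · rw [qbinom_zeroRq (by positivity) hz, mul_zero, zero_mul]
  rw [finsum_eq_sum_of_support_subset _ hsupp]
  have hp21 : (1 : RatFunc ℚ) ^ 2 = 1 := one_pow 2
  have hp22 : (-1 : RatFunc ℚ) ^ 2 = 1 := neg_one_sq
  have hs1 := ang_ne_X 1 (Or.inl rfl)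
  have hs2 := ang_ne_X (-1) (Or.inr rfl)
  rw [Prod.ext_iff]
  constructor
  · simp only [Prod.fst_sum, apply_ite Prod.fst, Prod.fst_mul, Prod.pow_fst, fst_zpow,
      qbinom_fst, pp_fst, qq_fst, Prod.fst_zero, Prod.fst_neg, Prod.fst_one]
    exact comp_main RatFunc.X 1 hX hp21 hs1 h k
  · simp only [Prod.snd_sum, apply_ite Prod.snd, Prod.snd_mul, Prod.pow_snd, snd_zpow,
      qbinom_snd, pp_snd, qq_snd, Prod.snd_zero, Prod.snd_neg, Prod.snd_one]
    exact comp_main RatFunc.X (-1) hX hp22 hs2 h k
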